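/- Let m, n be positive integers and let F be a binary image contained in {1,…,m} × {1,…,n} with row sums r_1,…,r_m and column sums c_1,…,c_n. Define b_i = #{j ∈ {1,…,n} : c_j ≥ i} and d_i = b_i − r_i for i = 1,…,m. Suppose k is an integer with 1 ≤ k ≤ m such that Σ_{i=1}^{k} d_i = 0. Then for every column j with c_j > k one has (i,j) ∈ F for all i with 1 ≤ i ≤ k, and for every column j with c_j ≤ k one has (i,j) ∉ F for all i with k+1 ≤ i ≤ m. -/

import Mathlib

/-- The row sum `r i` of a binary image `F`: the number of points of `F` in row `i`. -/
def rowSum (F : Finset (ℤ × ℤ)) (i : ℤ) : ℕ := (F.filter fun p => p.1 = i).card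

/-- The column sum `c j` of a binary image `F`: the number of points of `F` in column `j`. -/
def colSum (F : Finset (ℤ × ℤ)) (j : ℤ) : ℕ := (F.filter fun p => p.2 = j).card

/-- The length of the horizontal boundary of `F`: the number of pairs
`((i,j),(i',j'))` with `j = j'`, `|i - i'| = 1`, `(i,j) ∈ F` and `(i',j') ∉ F`. -/
noncomputable def horizBoundaryLen (F : Finset (ℤ × ℤ)) : ℕ :=
  Set.ncard {q : (ℤ × ℤ) × (ℤ × ℤ) |
    q.1.2 = q.2.2 ∧ |q.1.1 - q.2.1| = 1 ∧ q.1 ∈ F ∧ q.2 ∉ F}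

/-- If `Σ_{i=1}^k d_i = 0`, then every column `j` with `c_j > k` is full in rows
`1, …, k`, and every column `j` with `c_j ≤ k` is empty in rows `k+1, …, m`. -/
theorem sigma_zero_structure (m n : ℕ) (hm : 0 < m) (hn : 0 < n)
    (F : Finset (ℤ × ℤ))
    (hF : ∀ p ∈ F, p.1 ∈ Finset.Icc (1 : ℤ) (m : ℤ) ∧ p.2 ∈ Finset.Icc (1 : ℤ) (n : ℤ))
    (b : ℤ → ℕ)
    (hb : ∀ i : ℤ, b i = ((Finset.Icc (1 : ℤ) (n : ℤ)).filter fun j => i ≤ (colSum F j : ℤ)).card)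
    (d : ℤ → ℤ) (hd : ∀ i : ℤ, d i = (b i : ℤ) - (rowSum F i : ℤ))
    (k : ℤ) (hk1 : 1 ≤ k) (hkm : k ≤ (m : ℤ))
    (hσ : ∑ i ∈ Finset.Icc (1 : ℤ) k, d i = 0) :
    (∀ j : ℤ, 1 ≤ j → j ≤ (n : ℤ) → k < (colSum F j : ℤ) →
      ∀ i : ℤ, 1 ≤ i → i ≤ k → (i, j) ∈ F) ∧
    (∀ j : ℤ, 1 ≤ j → j ≤ (n : ℤ) → (colSum F j : ℤ) ≤ k →
      ∀ i : ℤ, k + 1 ≤ i → i ≤ (m : ℤ) → (i, j) ∉ F) := by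
  classical
  set S : ℤ → Finset (ℤ × ℤ) :=
    fun j => F.filter fun p => p.2 = j ∧ p.1 ∈ Finset.Icc (1:ℤ) k with hS
  -- Step A: row sums over [1,k] = sum over columns of truncated column counts
  have hA : ∑ i ∈ Finset.Icc (1:ℤ) k, rowSum F i
      = ∑ j ∈ Finset.Icc (1:ℤ) (n:ℤ), (S j).card := by
    have h1 : (F.filter fun p => p.1 ∈ Finset.Icc (1:ℤ) k).card
        = ∑ i ∈ Finset.Icc (1:ℤ) k, rowSum F i := by
      rw [Finset.card_eq_sum_card_fiberwise (s := F.filter fun p => p.1 ∈ Finset.Icc (1:ℤ) k) (f := Prod.fst) (t := Finset.Icc (1:ℤ) k)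
        (fun p hp => (Finset.mem_filter.mp hp).2)]
      refine Finset.sum_congr rfl fun i hi => ?_
      rw [rowSum, Finset.filter_filter]
      congr 1
      ext p
      simp only [Finset.mem_filter]
      constructor
      · rintro ⟨hpF, -, h⟩; exact ⟨hpF, h⟩
      · rintro ⟨hpF, h⟩; exact ⟨hpF, h ▸ hi, h⟩
    have h2 : (F.filter fun p => p.1 ∈ Finset.Icc (1:ℤ) k).card
        = ∑ j ∈ Finset.Icc (1:ℤ) (n:ℤ), (S j).card := by
      rw [Finset.card_eq_sum_card_fiberwise (s := F.filter fun p => p.1 ∈ Finset.Icc (1:ℤ) k) (f := Prod.snd) (t := Finset.Icc (1:ℤ) (n:ℤ))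
        (fun p hp => (hF p (Finset.mem_filter.mp hp).1).2)]
      refine Finset.sum_congr rfl fun j hj => ?_
      rw [hS, Finset.filter_filter]
      congr 1
      ext p
      simp only [Finset.mem_filter]
      tauto
    omega
  -- Step B: sum of b over [1,k] = sum over columns of min k c_j
  have hB : ∑ i ∈ Finset.Icc (1:ℤ) k, b i
      = ∑ j ∈ Finset.Icc (1:ℤ) (n:ℤ), (min k (colSum F j : ℤ)).toNat := by
    have : ∑ i ∈ Finset.Icc (1:ℤ) k, b i
        = ∑ j ∈ Finset.Icc (1:ℤ) (n:ℤ),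
            ((Finset.Icc (1:ℤ) k).filter fun i => i ≤ (colSum F j : ℤ)).card := by
      simp only [hb, Finset.card_filter]
      rw [Finset.sum_comm]
    rw [this]
    refine Finset.sum_congr rfl fun j hj => ?_
    have hfe : ((Finset.Icc (1:ℤ) k).filter fun i => i ≤ (colSum F j : ℤ))
        = Finset.Icc (1:ℤ) (min k (colSum F j : ℤ)) := by
      ext i
      simp only [Finset.mem_filter, Finset.mem_Icc, le_min_iff]
      omega
    rw [hfe, Int.card_Icc]
    omega
  -- equality of the two column sums
  have hsum : ∑ j ∈ Finset.Icc (1:ℤ) (n:ℤ), (min k (colSum F j : ℤ)).toNat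
      = ∑ j ∈ Finset.Icc (1:ℤ) (n:ℤ), (S j).card := by
    have h1 : ∑ i ∈ Finset.Icc (1:ℤ) k, (b i : ℤ)
        = ∑ i ∈ Finset.Icc (1:ℤ) k, (rowSum F i : ℤ) := by
      have := hσ
      simp only [hd, Finset.sum_sub_distrib] at this
      omega
    have h2 : ∑ i ∈ Finset.Icc (1:ℤ) k, b i = ∑ i ∈ Finset.Icc (1:ℤ) k, rowSum F i := by
      exact_mod_cast h1
    omega
  -- pointwise inequality
  have hle : ∀ j ∈ Finset.Icc (1:ℤ) (n:ℤ), (S j).card ≤ (min k (colSum F j : ℤ)).toNat := by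
    intro j hj
    have hc : (S j).card ≤ colSum F j := by
      apply Finset.card_le_card
      intro p hp
      rw [hS] at hp
      simp only [Finset.mem_filter] at hp ⊢
      exact ⟨hp.1, hp.2.1⟩
    have hk : (S j).card ≤ k.toNat := by
      have := Finset.card_le_card_of_injOn (s := S j) (f := Prod.fst) (t := Finset.Icc (1:ℤ) k)
        (fun p hp => (Finset.mem_filter.mp hp).2.2)
        (fun p hp q hq h => by
          have hp' := (Finset.mem_filter.mp hp).2.1
          have hq' := (Finset.mem_filter.mp hq).2.1
          exact Prod.ext h (hp'.trans hq'.symm))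
      rwa [Int.card_Icc, show (k + 1 - 1).toNat = k.toNat by omega] at this
    omega
  have heq : ∀ j ∈ Finset.Icc (1:ℤ) (n:ℤ), (S j).card = (min k (colSum F j : ℤ)).toNat := by
    intro j hj
    exact (Finset.sum_eq_sum_iff_of_le hle).mp hsum.symm j hj
  constructor
  · intro j hj1 hj2 hcj i hi1 hi2
    have hj : j ∈ Finset.Icc (1:ℤ) (n:ℤ) := Finset.mem_Icc.mpr ⟨hj1, hj2⟩
    have hcard : (S j).card = k.toNat := by
      have := heq j hj
      omega
    have himg : (S j).image Prod.fst = Finset.Icc (1:ℤ) k := by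
      apply Finset.eq_of_subset_of_card_le
      · intro x hx
        obtain ⟨p, hp, rfl⟩ := Finset.mem_image.mp hx
        exact (Finset.mem_filter.mp hp).2.2
      · rw [Finset.card_image_of_injOn (fun p hp q hq h => by
          have hp' := (Finset.mem_filter.mp hp).2.1
          have hq' := (Finset.mem_filter.mp hq).2.1
          exact Prod.ext h (hp'.trans hq'.symm)), hcard, Int.card_Icc]
        omega
    have : i ∈ (S j).image Prod.fst := by
      rw [himg]; exact Finset.mem_Icc.mpr ⟨hi1, hi2⟩
    obtain ⟨p, hp, hpi⟩ := Finset.mem_image.mp this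
    have hp' := Finset.mem_filter.mp hp
    have : p = (i, j) := Prod.ext hpi hp'.2.1
    exact this ▸ hp'.1
  · intro j hj1 hj2 hcj i hi1 hi2 hmem
    have hj : j ∈ Finset.Icc (1:ℤ) (n:ℤ) := Finset.mem_Icc.mpr ⟨hj1, hj2⟩
    have hcard : (S j).card = colSum F j := by
      have := heq j hj
      omega
    have hsub : S j ⊆ F.filter fun p => p.2 = j := by
      intro p hp
      have hp' := Finset.mem_filter.mp hp
      exact Finset.mem_filter.mpr ⟨hp'.1, hp'.2.1⟩
    have hSeq : S j = F.filter fun p => p.2 = j := by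
      apply Finset.eq_of_subset_of_card_le hsub
      rw [hcard]; exact le_rfl
    have : ((i, j) : ℤ × ℤ) ∈ S j := by
      rw [hSeq]
      exact Finset.mem_filter.mpr ⟨hmem, rfl⟩
    have := (Finset.mem_filter.mp this).2.2
    simp only [Finset.mem_Icc] at this
    omega
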